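/- arXiv:2507.16448 — 2 statements merged into one kernel-verified Lean document; each statement's English description precedes it below -/
import Mathlib

section
/- (Distribution of the time to ruin, initial surplus one.) Assume λ_{ij}(0) > 0 for all i,j ∈ E, Λ(0) is invertible, and the environment chain is stationary with distribution π. With initial surplus x = 1, for every n ≥ 1 the matrix of ruin-time probabilities (with (i,j)-entry the probability of {τ_0^− = n, J_n = j} started from state i with X_0 = 1) satisfies P_{x=1}(τ_0^− = n, J_n) = Λ(0)^{−1} · ( Σ_{m=1}^{n} V(n, m)·P − Σ_{m=1}^{n+1} V(n+1, m) ). -/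
open scoped BigOperators

noncomputable section

namespace CMB

/-- The weight that the compound Markov binomial model with horizon `n`, jump matrices `Λ`
and initial distribution `μ` assigns to the path `(J, C)`. -/
def pathWeight {N : ℕ} (Λ : ℕ → Matrix (Fin N) (Fin N) ℝ) (μ : Fin N → ℝ) (n : ℕ)
    (J : Fin (n + 1) → Fin N) (C : Fin n → ℕ) : ℝ :=
  μ (J 0) * ∏ k : Fin n, Λ (C k) (J k.castSucc) (J k.succ)

/-- The probability of the event `A` in the horizon-`n` compound Markov binomial model:
the sum of the weights of the paths belonging to the event. -/
def prob {N : ℕ} (Λ : ℕ → Matrix (Fin N) (Fin N) ℝ) (μ : Fin N → ℝ) (n : ℕ)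
    (A : (Fin (n + 1) → Fin N) → (Fin n → ℕ) → Prop) : ℝ :=
  ∑' p : { p : (Fin (n + 1) → Fin N) × (Fin n → ℕ) // A p.1 p.2 },
    pathWeight Λ μ n p.1.1 p.1.2

/-- Partial sums `S_k = C_1 + ⋯ + C_k` of the claims (`C i` is claim number `i+1`). -/
def S {n : ℕ} (C : Fin n → ℕ) (k : ℕ) : ℕ :=
  ∑ j : Fin n, if (j : ℕ) < k then C j else 0

/-- Dirac initial distribution `δ_i`. -/
def delta {N : ℕ} (i : Fin N) : Fin N → ℝ := fun i' => if i' = i then 1 else 0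

/-- `hitM Λ n a i j` is the probability, in the model with initial distribution `δ_i` and
initial surplus `x = 0` (so `X_k = k - S_k`), of the event `{τ_a^+ = n, J_n = j}`,
i.e. `X_k < a` for all `k < n` and `X_n ≥ a` and `J_n = j`. -/
def hitM {N : ℕ} (Λ : ℕ → Matrix (Fin N) (Fin N) ℝ) (n a : ℕ) : Matrix (Fin N) (Fin N) ℝ :=
  fun i j => prob Λ (delta i) n fun J C =>
    (∀ k, k < n → (k : ℤ) - S C k < (a : ℤ)) ∧ (a : ℤ) ≤ (n : ℤ) - S C n ∧ J (Fin.last n) = j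

/-- Jump matrices `Λ̃(m)`, with `λ̃_{ij}(m) = (π_j/π_i)·λ_{ji}(m)`, of the time-reversed model. -/
def lamTilde {N : ℕ} (Λ : ℕ → Matrix (Fin N) (Fin N) ℝ) (π : Fin N → ℝ) :
    ℕ → Matrix (Fin N) (Fin N) ℝ := fun m i j => π j / π i * Λ m j i

/-- `V(n,a) := Δ_π⁻¹ · M̃(n,a)ᵀ · Δ_π`, where `M̃(n,a)` is the matrix of first-passage
probabilities of the time-reversed model. -/
def Vmat {N : ℕ} (Λ : ℕ → Matrix (Fin N) (Fin N) ℝ) (π : Fin N → ℝ) (n a : ℕ) :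
    Matrix (Fin N) (Fin N) ℝ := fun i j => π j / π i * hitM (lamTilde Λ π) n a j i

/-- `ruinM Λ x n i j` is the probability of `{τ_0^- = n, J_n = j}` started from state `i`
with initial surplus `x` (so `X_k = x + k - S_k`): `X_k > 0` for `1 ≤ k < n` and `X_n ≤ 0`. -/
def ruinM {N : ℕ} (Λ : ℕ → Matrix (Fin N) (Fin N) ℝ) (x : ℕ) (n : ℕ) :
    Matrix (Fin N) (Fin N) ℝ := fun i j => prob Λ (delta i) n fun J C =>
      (∀ k, 1 ≤ k → k < n → 0 < (x : ℤ) + k - S C k) ∧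
      (x : ℤ) + n - S C n ≤ 0 ∧ J (Fin.last n) = j

set_option maxHeartbeats 1600000

/-- Ordered product `Λ(C 0) * Λ(C 1) * ⋯ * Λ(C (m-1))`. -/
def ordProd {N : ℕ} (Λ : ℕ → Matrix (Fin N) (Fin N) ℝ) : {m : ℕ} → (Fin m → ℕ) →
    Matrix (Fin N) (Fin N) ℝ
  | 0, _ => 1
  | _ + 1, C => Λ (C 0) * ordProd Λ (Fin.tail C)

@[simp] lemma ordProd_zero {N : ℕ} (Λ : ℕ → Matrix (Fin N) (Fin N) ℝ) (C : Fin 0 → ℕ) :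
    ordProd Λ C = 1 := rfl

lemma ordProd_succ {N : ℕ} (Λ : ℕ → Matrix (Fin N) (Fin N) ℝ) {m : ℕ} (C : Fin (m + 1) → ℕ) :
    ordProd Λ C = Λ (C 0) * ordProd Λ (Fin.tail C) := rfl

lemma ordProd_cons {N : ℕ} (Λ : ℕ → Matrix (Fin N) (Fin N) ℝ) {m : ℕ} (a : ℕ) (C : Fin m → ℕ) :
    ordProd Λ (Fin.cons a C) = Λ a * ordProd Λ C := by
  rw [ordProd_succ, Fin.cons_zero, Fin.tail_cons]

lemma ordProd_snoc {N : ℕ} (Λ : ℕ → Matrix (Fin N) (Fin N) ℝ) : ∀ {m : ℕ} (C : Fin m → ℕ)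
    (a : ℕ), ordProd Λ (Fin.snoc C a) = ordProd Λ C * Λ a := by
  intro m
  induction m with
  | zero =>
    intro C a
    rw [ordProd_succ]
    have h0 : (Fin.snoc C a : Fin 1 → ℕ) 0 = a := by
      have : (0 : Fin 1) = Fin.last 0 := rfl
      rw [this, Fin.snoc_last]
    rw [h0]
    simp
  | succ m ih =>
    intro C a
    rw [ordProd_succ]
    have h0 : (Fin.snoc C a : Fin (m + 2) → ℕ) 0 = C 0 := by
      have : (0 : Fin (m + 2)) = Fin.castSucc 0 := rfl
      rw [this, Fin.snoc_castSucc]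
    have ht : Fin.tail (Fin.snoc C a : Fin (m + 2) → ℕ) = Fin.snoc (Fin.tail C) a := by
      funext k
      induction k using Fin.lastCases with
      | last => simp [Fin.tail, Fin.succ_last]
      | cast k' => simp only [Fin.tail, Fin.succ_castSucc, Fin.snoc_castSucc]
    rw [h0, ht, ih, ordProd_succ Λ C, mul_assoc]

lemma ordProd_nonneg {N : ℕ} {Λ : ℕ → Matrix (Fin N) (Fin N) ℝ} (hΛ : ∀ m i j, 0 ≤ Λ m i j) :
    ∀ {m : ℕ} (C : Fin m → ℕ) (i j : Fin N), 0 ≤ ordProd Λ C i j := by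
  intro m
  induction m with
  | zero =>
    intro C i j
    rw [ordProd_zero, Matrix.one_apply]
    split <;> norm_num
  | succ m ih =>
    intro C i j
    rw [ordProd_succ, Matrix.mul_apply]
    exact Finset.sum_nonneg fun k _ => mul_nonneg (hΛ _ _ _) (ih _ _ _)

lemma hasSum_ordProd {N : ℕ} {Λ : ℕ → Matrix (Fin N) (Fin N) ℝ}
    {P : Matrix (Fin N) (Fin N) ℝ} (hΛ : ∀ m i j, 0 ≤ Λ m i j)
    (hP : ∀ i j, HasSum (fun m => Λ m i j) (P i j)) :
    ∀ {m : ℕ} (i j : Fin N), HasSum (fun C : Fin m → ℕ => ordProd Λ C i j) ((P ^ m) i j) := by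
  intro m
  induction m with
  | zero =>
    intro i j
    have h := hasSum_single (f := fun C : Fin 0 → ℕ => ordProd Λ C i j) default
      (fun b hb => absurd (Subsingleton.elim b default) hb)
    simpa [pow_zero] using h
  | succ m ih =>
    intro i j
    have key : ∀ i' : Fin N, HasSum
        (fun p : ℕ × (Fin m → ℕ) => Λ p.1 i i' * ordProd Λ p.2 i' j)
        (P i i' * (P ^ m) i' j) := by
      intro i'
      have h1 := hP i i'
      have h2 := ih i' j
      have hn1 : Summable (fun a : ℕ => ‖Λ a i i'‖) :=
        (summable_congr fun a => Real.norm_of_nonneg (hΛ _ _ _)).mpr h1.summable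
      have hn2 : Summable (fun C : Fin m → ℕ => ‖ordProd Λ C i' j‖) :=
        (summable_congr fun C => Real.norm_of_nonneg (ordProd_nonneg hΛ _ _ _)).mpr h2.summable
      exact h1.mul h2 (summable_mul_of_summable_norm hn1 hn2)
    have hsum : HasSum (fun p : ℕ × (Fin m → ℕ) => ∑ i' : Fin N,
        Λ p.1 i i' * ordProd Λ p.2 i' j) (∑ i' : Fin N, P i i' * (P ^ m) i' j) :=
      hasSum_sum (fun i' _ => key i')
    have hfun : ∀ p : ℕ × (Fin m → ℕ),
        (∑ i' : Fin N, Λ p.1 i i' * ordProd Λ p.2 i' j)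
          = ordProd Λ (Fin.cons p.1 p.2) i j := by
      intro p
      rw [ordProd_cons, Matrix.mul_apply]
    simp only [hfun] at hsum
    have hval : (P ^ (m + 1)) i j = ∑ i' : Fin N, P i i' * (P ^ m) i' j := by
      rw [pow_succ', Matrix.mul_apply]
    rw [hval]
    have hcomp : ((fun C : Fin (m+1) → ℕ => ordProd Λ C i j)
          ∘ (Fin.consEquiv (fun _ : Fin (m+1) => ℕ)))
        = fun p : ℕ × (Fin m → ℕ) => ordProd Λ (Fin.cons p.1 p.2) i j := by
      funext p
      simp [Fin.consEquiv]
    refine (Equiv.hasSum_iff (Fin.consEquiv (fun _ : Fin (m+1) => ℕ))).mp ?_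
    rw [hcomp]
    exact hsum

lemma summable_ordProd {N : ℕ} {Λ : ℕ → Matrix (Fin N) (Fin N) ℝ}
    (hΛ : ∀ m i j, 0 ≤ Λ m i j) (hS : ∀ i j, Summable (fun m => Λ m i j))
    {m : ℕ} (i j : Fin N) : Summable (fun C : Fin m → ℕ => ordProd Λ C i j) := by
  have hP : ∀ i j, HasSum (fun m => Λ m i j)
      ((Matrix.of fun i j => ∑' m, Λ m i j) i j) := fun i j => (hS i j).hasSum
  exact (hasSum_ordProd hΛ hP i j).summable

lemma pathWeight_nonneg {N : ℕ} {Λ : ℕ → Matrix (Fin N) (Fin N) ℝ} {μ : Fin N → ℝ}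
    (hΛ : ∀ m i j, 0 ≤ Λ m i j) (hμ : ∀ i, 0 ≤ μ i) {m : ℕ}
    (J : Fin (m + 1) → Fin N) (C : Fin m → ℕ) : 0 ≤ pathWeight Λ μ m J C :=
  mul_nonneg (hμ _) (Finset.prod_nonneg fun _ _ => hΛ _ _ _)

lemma delta_nonneg {N : ℕ} (i i' : Fin N) : 0 ≤ delta i i' := by
  unfold delta; split <;> norm_num

lemma sum_paths {N : ℕ} (Λ : ℕ → Matrix (Fin N) (Fin N) ℝ) :
    ∀ {m : ℕ} (C : Fin m → ℕ) (i j : Fin N),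
    (∑ J : Fin (m + 1) → Fin N,
      if J (Fin.last m) = j then pathWeight Λ (delta i) m J C else 0) = ordProd Λ C i j := by
  intro m
  induction m with
  | zero =>
    intro C i j
    rw [← Equiv.sum_comp (Equiv.funUnique (Fin 1) (Fin N)).symm
      (fun J : Fin 1 → Fin N => if J (Fin.last 0) = j then pathWeight Λ (delta i) 0 J C else 0)]
    have h1 : ∀ x : Fin N,
        (if ((Equiv.funUnique (Fin 1) (Fin N)).symm x) (Fin.last 0) = j
          then pathWeight Λ (delta i) 0 ((Equiv.funUnique (Fin 1) (Fin N)).symm x) C else 0)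
        = if x = j then delta i x else 0 := by
      intro x
      simp [pathWeight, Equiv.funUnique, delta]
    rw [Finset.sum_congr rfl fun x _ => h1 x, Finset.sum_ite_eq' Finset.univ j (delta i)]
    simp [delta, Matrix.one_apply, eq_comm]
  | succ m ih =>
    intro C i j
    rw [ordProd_succ, Matrix.mul_apply]
    rw [← Equiv.sum_comp (Fin.consEquiv (fun _ : Fin (m + 2) => Fin N))
      (fun J : Fin (m + 2) → Fin N =>
        if J (Fin.last (m + 1)) = j then pathWeight Λ (delta i) (m + 1) J C else 0)]
    rw [Fintype.sum_prod_type]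
    have hterm : ∀ (x : Fin N) (J' : Fin (m + 1) → Fin N),
        (if ((Fin.consEquiv (fun _ : Fin (m + 2) => Fin N)) (x, J')) (Fin.last (m + 1)) = j
          then pathWeight Λ (delta i) (m + 1)
            ((Fin.consEquiv (fun _ : Fin (m + 2) => Fin N)) (x, J')) C else 0)
        = delta i x * ∑ i' : Fin N, Λ (C 0) x i' *
            (if J' (Fin.last m) = j then pathWeight Λ (delta i') m J' (Fin.tail C) else 0) := by
      intro x J'
      have hcons : (((Fin.consEquiv (fun _ : Fin (m + 2) => Fin N)) (x, J')) : Fin (m + 2) → Fin N)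
          = Fin.cons x J' := rfl
      rw [hcons]
      have hlast : (Fin.cons x J' : Fin (m + 2) → Fin N) (Fin.last (m + 1)) = J' (Fin.last m) := by
        rw [← Fin.succ_last, Fin.cons_succ]
      rw [hlast]
      have hpw : pathWeight Λ (delta i) (m + 1) (Fin.cons x J') C
          = delta i x * (Λ (C 0) x (J' 0) *
              (∏ k : Fin m, Λ (Fin.tail C k) (J' k.castSucc) (J' k.succ))) := by
        unfold pathWeight
        rw [Fin.prod_univ_succ]
        simp only [Fin.cons_zero, Fin.castSucc_zero, Fin.cons_succ, ← Fin.succ_castSucc,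
          Fin.tail]
      rw [hpw]
      have hins : ∀ i' : Fin N, Λ (C 0) x i' *
          (if J' (Fin.last m) = j then pathWeight Λ (delta i') m J' (Fin.tail C) else 0)
          = if J' (Fin.last m) = j then
              (if J' 0 = i' then Λ (C 0) x i' *
                (∏ k : Fin m, Λ (Fin.tail C k) (J' k.castSucc) (J' k.succ)) else 0) else 0 := by
        intro i'
        unfold pathWeight delta
        by_cases h : J' (Fin.last m) = j <;> by_cases h' : J' 0 = i' <;> simp [h, h']
      rw [Finset.sum_congr rfl fun i' _ => hins i']
      by_cases h : J' (Fin.last m) = j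
      · simp only [h, if_true]
        rw [Finset.sum_ite_eq Finset.univ (J' 0)
          (fun i' => Λ (C 0) x i' * (∏ k : Fin m, Λ (Fin.tail C k) (J' k.castSucc) (J' k.succ)))]
        simp [mul_assoc]
      · simp [h]
    rw [Finset.sum_congr rfl fun x _ => Finset.sum_congr rfl fun J' _ => hterm x J']
    have hswap : ∀ x : Fin N, (∑ J' : Fin (m + 1) → Fin N, delta i x * ∑ i' : Fin N,
        Λ (C 0) x i' * (if J' (Fin.last m) = j
          then pathWeight Λ (delta i') m J' (Fin.tail C) else 0))
        = delta i x * ∑ i' : Fin N, Λ (C 0) x i' * ordProd Λ (Fin.tail C) i' j := by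
      intro x
      rw [← Finset.mul_sum]
      congr 1
      rw [Finset.sum_comm]
      apply Finset.sum_congr rfl
      intro i' _
      rw [← Finset.mul_sum, ih (Fin.tail C) i' j]
    rw [Finset.sum_congr rfl fun x _ => hswap x]
    have hdel : ∀ x : Fin N, delta i x * ∑ i' : Fin N, Λ (C 0) x i' * ordProd Λ (Fin.tail C) i' j
        = if x = i then (∑ i' : Fin N, Λ (C 0) x i' * ordProd Λ (Fin.tail C) i' j) else 0 := by
      intro x
      unfold delta
      by_cases h : x = i <;> simp [h]
    rw [Finset.sum_congr rfl fun x _ => hdel x,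
      Finset.sum_ite_eq' Finset.univ i
        (fun x => ∑ i' : Fin N, Λ (C 0) x i' * ordProd Λ (Fin.tail C) i' j)]
    simp


attribute [local instance] Classical.propDecidable

lemma summable_ind_ordProd {N : ℕ} {Λ : ℕ → Matrix (Fin N) (Fin N) ℝ}
    (hΛ : ∀ m i j, 0 ≤ Λ m i j) (hS : ∀ i j, Summable (fun m => Λ m i j))
    {m : ℕ} (φ : Set (Fin m → ℕ)) (i j : Fin N) :
    Summable (φ.indicator fun C : Fin m → ℕ => ordProd Λ C i j) :=
  (summable_ordProd hΛ hS i j).indicator φ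

lemma ind_ordProd_nonneg {N : ℕ} {Λ : ℕ → Matrix (Fin N) (Fin N) ℝ}
    (hΛ : ∀ m i j, 0 ≤ Λ m i j) {m : ℕ} (φ : Set (Fin m → ℕ)) (i j : Fin N) (C : Fin m → ℕ) :
    0 ≤ φ.indicator (fun C : Fin m → ℕ => ordProd Λ C i j) C :=
  Set.indicator_apply_nonneg fun _ => ordProd_nonneg hΛ _ _ _

lemma summable_pathWeight {N : ℕ} {Λ : ℕ → Matrix (Fin N) (Fin N) ℝ}
    (hΛ : ∀ m i j, 0 ≤ Λ m i j) (hS : ∀ i j, Summable (fun m => Λ m i j))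
    {m : ℕ} (i : Fin N) :
    Summable fun p : (Fin (m + 1) → Fin N) × (Fin m → ℕ) =>
      pathWeight Λ (delta i) m p.1 p.2 := by
  have hnn : ∀ p : (Fin (m + 1) → Fin N) × (Fin m → ℕ),
      0 ≤ pathWeight Λ (delta i) m p.1 p.2 :=
    fun p => pathWeight_nonneg hΛ (delta_nonneg i) p.1 p.2
  rw [summable_prod_of_nonneg hnn]
  constructor
  · intro J
    refine Summable.of_nonneg_of_le (f := fun C : Fin m → ℕ => ∑ j' : Fin N, ordProd Λ C i j')
      (fun C => hnn (J, C)) (fun C => ?_)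
      (summable_sum fun j' _ => summable_ordProd hΛ hS i j')
    · show pathWeight Λ (delta i) m J C ≤ ∑ j' : Fin N, ordProd Λ C i j'
      have h1 : pathWeight Λ (delta i) m J C ≤ ordProd Λ C i (J (Fin.last m)) := by
        rw [← sum_paths Λ C i (J (Fin.last m))]
        have := Finset.single_le_sum (f := fun J' : Fin (m + 1) → Fin N =>
          if J' (Fin.last m) = J (Fin.last m) then pathWeight Λ (delta i) m J' C else 0)
          (fun J' _ => by
            split
            exacts [pathWeight_nonneg hΛ (delta_nonneg i) _ _, le_rfl])
          (Finset.mem_univ J)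
        simpa using this
      refine h1.trans ?_
      exact Finset.single_le_sum (f := fun j' => ordProd Λ C i j')
        (fun j' _ => ordProd_nonneg hΛ _ _ _) (Finset.mem_univ _)
  · exact Summable.of_finite

lemma prob_eq {N : ℕ} {Λ : ℕ → Matrix (Fin N) (Fin N) ℝ}
    (hΛ : ∀ m i j, 0 ≤ Λ m i j) (hS : ∀ i j, Summable (fun m => Λ m i j))
    {m : ℕ} (A B : (Fin m → ℕ) → Prop) (i j : Fin N) :
    prob Λ (delta i) m (fun J C => A C ∧ B C ∧ J (Fin.last m) = j)
      = ∑' C : Fin m → ℕ,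
          Set.indicator {C | A C ∧ B C} (fun C => ordProd Λ C i j) C := by
  classical
  set w : (Fin (m + 1) → Fin N) × (Fin m → ℕ) → ℝ :=
    fun p => pathWeight Λ (delta i) m p.1 p.2 with hw
  set f : (Fin (m + 1) → Fin N) × (Fin m → ℕ) → ℝ :=
    fun p => if A p.2 ∧ B p.2 ∧ p.1 (Fin.last m) = j then w p else 0 with hf
  have hfnn : ∀ p, 0 ≤ f p := by
    intro p
    by_cases h : A p.2 ∧ B p.2 ∧ p.1 (Fin.last m) = j
    · simp only [hf, if_pos h]
      exact pathWeight_nonneg hΛ (delta_nonneg i) _ _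
    · simp only [hf, if_neg h]
      exact le_rfl
  have hfle : ∀ p, f p ≤ w p := by
    intro p
    by_cases h : A p.2 ∧ B p.2 ∧ p.1 (Fin.last m) = j
    · simp only [hf, if_pos h]
      exact le_rfl
    · simp only [hf, if_neg h]
      exact pathWeight_nonneg hΛ (delta_nonneg i) _ _
  have hfs : Summable f :=
    Summable.of_nonneg_of_le hfnn hfle (summable_pathWeight hΛ hS i)
  have h0 : prob Λ (delta i) m (fun J C => A C ∧ B C ∧ J (Fin.last m) = j) = ∑' p, f p := by
    rw [prob]
    refine Eq.trans (b := ∑' x, Set.indicator {p : (Fin (m + 1) → Fin N) × (Fin m → ℕ) |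
        A p.2 ∧ B p.2 ∧ p.1 (Fin.last m) = j} w x) ?_ ?_
    · exact tsum_subtype _ w
    · refine tsum_congr fun p => ?_
      simp only [Set.indicator_apply, Set.mem_setOf_eq, hf]
  rw [h0, Summable.tsum_prod' hfs (fun J => hfs.prod_factor J), tsum_fintype,
    ← Summable.tsum_finsetSum (fun J _ => (hfs.prod_factor J))]
  refine tsum_congr fun C => ?_
  by_cases h : A C ∧ B C
  · have h' : ∀ J : Fin (m + 1) → Fin N, f (J, C)
        = if J (Fin.last m) = j then pathWeight Λ (delta i) m J C else 0 := by
      intro J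
      rw [hf]
      simp [h.1, h.2, hw]
    rw [Finset.sum_congr rfl fun J _ => h' J, sum_paths Λ C i j,
      Set.indicator_of_mem (show C ∈ {C | A C ∧ B C} from h)]
  · have h' : ∀ J : Fin (m + 1) → Fin N, f (J, C) = 0 := by
      intro J
      rw [hf]
      simp only [hw]
      rw [if_neg]
      tauto
    rw [Finset.sum_congr rfl fun J _ => h' J,
      Set.indicator_of_notMem (show C ∉ {C | A C ∧ B C} from h)]
    simp

/-- Reversal of a claims vector. -/
def revFun {m : ℕ} (C : Fin m → ℕ) : Fin m → ℕ := fun k => C k.rev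

lemma revFun_revFun {m : ℕ} (C : Fin m → ℕ) : revFun (revFun C) = C :=
  funext fun k => by simp [revFun, Fin.rev_rev]

lemma revFun_eq_snoc {m : ℕ} (C : Fin (m + 1) → ℕ) :
    revFun C = Fin.snoc (revFun (Fin.tail C)) (C 0) := by
  funext k
  induction k using Fin.lastCases with
  | last => simp [revFun, Fin.snoc_last, Fin.rev_last]
  | cast k' => simp [revFun, Fin.snoc_castSucc, Fin.rev_castSucc, Fin.tail]

lemma ordProd_lamTilde {N : ℕ} {Λ : ℕ → Matrix (Fin N) (Fin N) ℝ} {π : Fin N → ℝ}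
    (hπ : ∀ i, 0 < π i) : ∀ {m : ℕ} (C : Fin m → ℕ) (i j : Fin N),
    ordProd (lamTilde Λ π) C j i = π i / π j * ordProd Λ (revFun C) i j := by
  intro m
  induction m with
  | zero =>
    intro C i j
    rw [ordProd_zero, ordProd_zero, Matrix.one_apply, Matrix.one_apply]
    by_cases h : i = j
    · subst h
      simp [div_self (hπ i).ne']
    · simp [h, Ne.symm h]
  | succ m ih =>
    intro C i j
    rw [ordProd_succ, Matrix.mul_apply]
    have hterm : ∀ j' : Fin N, lamTilde Λ π (C 0) j j' * ordProd (lamTilde Λ π) (Fin.tail C) j' i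
        = π i / π j * (ordProd Λ (revFun (Fin.tail C)) i j' * Λ (C 0) j' j) := by
      intro j'
      rw [ih (Fin.tail C) i j', lamTilde]
      have h1 : π j' ≠ 0 := (hπ j').ne'
      have h2 : π j ≠ 0 := (hπ j).ne'
      field_simp
    rw [Finset.sum_congr rfl fun j' _ => hterm j', ← Finset.mul_sum]
    congr 1
    rw [← Matrix.mul_apply, ← ordProd_snoc, ← revFun_eq_snoc]

lemma lamTilde_nonneg {N : ℕ} {Λ : ℕ → Matrix (Fin N) (Fin N) ℝ}
    (hΛ : ∀ m i j, 0 ≤ Λ m i j) {π : Fin N → ℝ} (hπ : ∀ i, 0 < π i) :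
    ∀ m i j, 0 ≤ lamTilde Λ π m i j :=
  fun m i j => mul_nonneg (div_nonneg (hπ j).le (hπ i).le) (hΛ m j i)

lemma lamTilde_summable {N : ℕ} {Λ : ℕ → Matrix (Fin N) (Fin N) ℝ}
    (hS : ∀ i j, Summable fun m => Λ m i j) (π : Fin N → ℝ) :
    ∀ i j, Summable fun m => lamTilde Λ π m i j :=
  fun i j => Summable.mul_left _ (hS j i)

lemma Vmat_eq {N : ℕ} {Λ : ℕ → Matrix (Fin N) (Fin N) ℝ}
    (hΛ : ∀ m i j, 0 ≤ Λ m i j) (hS : ∀ i j, Summable fun m => Λ m i j)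
    {π : Fin N → ℝ} (hπ : ∀ i, 0 < π i) (m a : ℕ) (i j : Fin N) :
    Vmat Λ π m a i j = ∑' C : Fin m → ℕ,
      Set.indicator {C : Fin m → ℕ | (∀ k, k < m → (k : ℤ) - S (revFun C) k < (a : ℤ)) ∧
          (a : ℤ) ≤ (m : ℤ) - S (revFun C) m}
        (fun C => ordProd Λ C i j) C := by
  have h1 : Vmat Λ π m a i j = π j / π i * prob (lamTilde Λ π) (delta j) m
      (fun J C => (∀ k, k < m → (k : ℤ) - S C k < (a : ℤ)) ∧
        ((a : ℤ) ≤ (m : ℤ) - S C m ∧ J (Fin.last m) = i)) := rfl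
  rw [h1, prob_eq (lamTilde_nonneg hΛ hπ) (lamTilde_summable hS π)
    (fun C => ∀ k, k < m → (k : ℤ) - S C k < (a : ℤ))
    (fun C => (a : ℤ) ≤ (m : ℤ) - S C m) j i, ← tsum_mul_left]
  have h2 : ∀ C : Fin m → ℕ,
      π j / π i * Set.indicator {C : Fin m → ℕ | (∀ k, k < m → (k : ℤ) - S C k < (a : ℤ)) ∧
          (a : ℤ) ≤ (m : ℤ) - S C m} (fun C => ordProd (lamTilde Λ π) C j i) C
      = Set.indicator {C : Fin m → ℕ | (∀ k, k < m → (k : ℤ) - S C k < (a : ℤ)) ∧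
          (a : ℤ) ≤ (m : ℤ) - S C m} (fun C => ordProd Λ (revFun C) i j) C := by
    intro C
    by_cases h : C ∈ {C : Fin m → ℕ | (∀ k, k < m → (k : ℤ) - S C k < (a : ℤ)) ∧
        (a : ℤ) ≤ (m : ℤ) - S C m}
    · rw [Set.indicator_of_mem h, Set.indicator_of_mem h]
      rw [ordProd_lamTilde hπ]
      rw [← mul_assoc, div_mul_div_comm]
      rw [show π j * π i / (π i * π j) = 1 by
        rw [mul_comm (π i) (π j)]
        exact div_self (mul_ne_zero (hπ j).ne' (hπ i).ne')]
      rw [one_mul]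
    · rw [Set.indicator_of_notMem h, Set.indicator_of_notMem h, mul_zero]
  refine Eq.trans (tsum_congr h2) ?_
  rw [← Equiv.tsum_eq (Function.Involutive.toPerm revFun revFun_revFun)
    (fun C : Fin m → ℕ => Set.indicator {C : Fin m → ℕ |
        (∀ k, k < m → (k : ℤ) - S C k < (a : ℤ)) ∧
        (a : ℤ) ≤ (m : ℤ) - S C m} (fun C => ordProd Λ (revFun C) i j) C)]
  refine tsum_congr fun C => ?_
  have hC : (Function.Involutive.toPerm revFun revFun_revFun) C = revFun C := rfl
  rw [hC]
  by_cases h : (∀ k, k < m → (k : ℤ) - S (revFun C) k < (a : ℤ)) ∧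
      (a : ℤ) ≤ (m : ℤ) - S (revFun C) m
  · rw [Set.indicator_of_mem (show revFun C ∈ _ from h),
      Set.indicator_of_mem (show C ∈ _ from h), revFun_revFun]
  · rw [Set.indicator_of_notMem (show revFun C ∉ _ from h),
      Set.indicator_of_notMem (show C ∉ _ from h)]

/-- The snoc equivalence. -/
def snocE (m : ℕ) : (Fin m → ℕ) × ℕ ≃ (Fin (m + 1) → ℕ) where
  toFun q := Fin.snoc q.1 q.2
  invFun D := (Fin.init D, D (Fin.last m))
  left_inv q := by simp [Fin.init_snoc, Fin.snoc_last]
  right_inv D := by simp [Fin.snoc_init_self]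

lemma mulP_eq {N : ℕ} {Λ : ℕ → Matrix (Fin N) (Fin N) ℝ} {P : Matrix (Fin N) (Fin N) ℝ}
    (hΛ : ∀ m i j, 0 ≤ Λ m i j) (hP : ∀ i j, HasSum (fun m => Λ m i j) (P i j))
    {m : ℕ} (φ : Set (Fin m → ℕ)) (i j : Fin N) :
    ((Matrix.of fun i j => ∑' C : Fin m → ℕ, φ.indicator (fun C => ordProd Λ C i j) C) * P) i j
      = ∑' D : Fin (m + 1) → ℕ,
          Set.indicator {D : Fin (m + 1) → ℕ | Fin.init D ∈ φ}
            (fun D => ordProd Λ D i j) D := by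
  have hS : ∀ i j, Summable fun m => Λ m i j := fun i j => (hP i j).summable
  rw [Matrix.mul_apply]
  have key : ∀ j' : Fin N, HasSum (fun q : (Fin m → ℕ) × ℕ =>
      Set.indicator {q : (Fin m → ℕ) × ℕ | q.1 ∈ φ}
        (fun q => ordProd Λ q.1 i j' * Λ q.2 j' j) q)
      ((Matrix.of fun i j => ∑' C : Fin m → ℕ,
          φ.indicator (fun C => ordProd Λ C i j) C) i j' * P j' j) := by
    intro j'
    have hg : HasSum (φ.indicator fun C : Fin m → ℕ => ordProd Λ C i j')
        (∑' C, φ.indicator (fun C : Fin m → ℕ => ordProd Λ C i j') C) :=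
      (summable_ind_ordProd hΛ hS φ i j').hasSum
    have hn1 : Summable (fun C : Fin m → ℕ =>
        ‖φ.indicator (fun C : Fin m → ℕ => ordProd Λ C i j') C‖) := by
      refine (summable_congr fun C => ?_).mpr hg.summable
      exact Real.norm_of_nonneg (ind_ordProd_nonneg hΛ φ i j' C)
    have hn2 : Summable (fun a : ℕ => ‖Λ a j' j‖) :=
      (summable_congr fun a => Real.norm_of_nonneg (hΛ _ _ _)).mpr (hS j' j)
    have hmul := hg.mul (hP j' j) (summable_mul_of_summable_norm hn1 hn2)
    have hfun : (fun q : (Fin m → ℕ) × ℕ =>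
        φ.indicator (fun C : Fin m → ℕ => ordProd Λ C i j') q.1 * Λ q.2 j' j)
        = fun q : (Fin m → ℕ) × ℕ => Set.indicator {q : (Fin m → ℕ) × ℕ | q.1 ∈ φ}
            (fun q => ordProd Λ q.1 i j' * Λ q.2 j' j) q := by
      funext q
      by_cases h : q.1 ∈ φ
      · rw [Set.indicator_of_mem h, Set.indicator_of_mem (show q ∈ _ from h)]
      · rw [Set.indicator_of_notMem h, Set.indicator_of_notMem (show q ∉ _ from h), zero_mul]
    rw [hfun] at hmul
    rw [Matrix.of_apply]
    exact hmul
  have hsum := hasSum_sum (s := Finset.univ) (fun j' _ => key j')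
  rw [← hsum.tsum_eq]
  have hstep : ∀ q : (Fin m → ℕ) × ℕ,
      (∑ j' : Fin N, Set.indicator {q : (Fin m → ℕ) × ℕ | q.1 ∈ φ}
        (fun q => ordProd Λ q.1 i j' * Λ q.2 j' j) q)
      = Set.indicator {D : Fin (m + 1) → ℕ | Fin.init D ∈ φ}
          (fun D => ordProd Λ D i j) (snocE m q) := by
    intro q
    have hq : (snocE m q : Fin (m + 1) → ℕ) = Fin.snoc q.1 q.2 := rfl
    by_cases h : q.1 ∈ φ
    · have hmem : (snocE m q : Fin (m + 1) → ℕ) ∈ {D : Fin (m + 1) → ℕ | Fin.init D ∈ φ} := by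
        show Fin.init (snocE m q) ∈ φ
        rw [hq, Fin.init_snoc]
        exact h
      rw [Set.indicator_of_mem hmem]
      rw [Finset.sum_congr rfl fun j' _ => Set.indicator_of_mem (show q ∈ _ from h) _]
      rw [hq, ordProd_snoc, Matrix.mul_apply]
    · have hmem : (snocE m q : Fin (m + 1) → ℕ) ∉ {D : Fin (m + 1) → ℕ | Fin.init D ∈ φ} := by
        show ¬ Fin.init (snocE m q) ∈ φ
        rw [hq, Fin.init_snoc]
        exact h
      rw [Set.indicator_of_notMem hmem]
      rw [Finset.sum_congr rfl fun j' _ =>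
        Set.indicator_of_notMem (show q ∉ _ from h) _]
      simp
  rw [tsum_congr hstep]
  exact Equiv.tsum_eq (snocE m) _

lemma lam0_mul_eq {N : ℕ} {Λ : ℕ → Matrix (Fin N) (Fin N) ℝ}
    (hΛ : ∀ m i j, 0 ≤ Λ m i j) (hS : ∀ i j, Summable fun m => Λ m i j)
    {m : ℕ} (φ : Set (Fin m → ℕ)) (i j : Fin N) :
    (Λ 0 * Matrix.of fun i j => ∑' C : Fin m → ℕ,
        φ.indicator (fun C => ordProd Λ C i j) C) i j
      = ∑' D : Fin (m + 1) → ℕ,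
          Set.indicator {D : Fin (m + 1) → ℕ | D 0 = 0 ∧ Fin.tail D ∈ φ}
            (fun D => ordProd Λ D i j) D := by
  rw [Matrix.mul_apply]
  have h1 : ∀ i' : Fin N, Λ 0 i i' * (Matrix.of fun i j => ∑' C : Fin m → ℕ,
      φ.indicator (fun C => ordProd Λ C i j) C) i' j
      = ∑' C : Fin m → ℕ, Λ 0 i i' * φ.indicator (fun C : Fin m → ℕ => ordProd Λ C i' j) C := by
    intro i'
    rw [Matrix.of_apply, tsum_mul_left]
  rw [Finset.sum_congr rfl fun i' _ => h1 i']
  rw [← Summable.tsum_finsetSum (fun i' _ => Summable.mul_left _ (summable_ind_ordProd hΛ hS φ i' j))]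
  have h2 : ∀ C : Fin m → ℕ,
      (∑ i' : Fin N, Λ 0 i i' * φ.indicator (fun C : Fin m → ℕ => ordProd Λ C i' j) C)
      = φ.indicator (fun C : Fin m → ℕ => ordProd Λ (Fin.cons 0 C) i j) C := by
    intro C
    by_cases h : C ∈ φ
    · rw [Set.indicator_of_mem h]
      rw [Finset.sum_congr rfl fun i' _ => by rw [Set.indicator_of_mem h]]
      rw [ordProd_cons, Matrix.mul_apply]
    · rw [Set.indicator_of_notMem h]
      rw [Finset.sum_congr rfl fun i' _ => by rw [Set.indicator_of_notMem h, mul_zero]]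
      simp
  rw [tsum_congr h2]
  have hinj : Function.Injective (fun C : Fin m → ℕ => (Fin.cons 0 C : Fin (m + 1) → ℕ)) := by
    intro C C' h
    have := congrArg Fin.tail h
    rwa [Fin.tail_cons, Fin.tail_cons] at this
  have hsupp : Function.support (fun D : Fin (m + 1) → ℕ =>
      Set.indicator {D : Fin (m + 1) → ℕ | D 0 = 0 ∧ Fin.tail D ∈ φ}
        (fun D => ordProd Λ D i j) D)
      ⊆ Set.range (fun C : Fin m → ℕ => (Fin.cons 0 C : Fin (m + 1) → ℕ)) := by
    intro D hD
    have hmem : D ∈ {D : Fin (m + 1) → ℕ | D 0 = 0 ∧ Fin.tail D ∈ φ} := by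
      by_contra hc
      exact hD (Set.indicator_of_notMem hc _)
    refine ⟨Fin.tail D, ?_⟩
    have h0 : D 0 = 0 := hmem.1
    calc (fun C : Fin m → ℕ => (Fin.cons 0 C : Fin (m + 1) → ℕ)) (Fin.tail D)
        = Fin.cons (D 0) (Fin.tail D) := by rw [h0]
      _ = D := Fin.cons_self_tail D
  rw [← Function.Injective.tsum_eq hinj hsupp]
  refine tsum_congr fun C => ?_
  by_cases h : C ∈ φ
  · have hmem : (Fin.cons 0 C : Fin (m + 1) → ℕ) ∈
        {D : Fin (m + 1) → ℕ | D 0 = 0 ∧ Fin.tail D ∈ φ} := by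
      refine ⟨by simp, ?_⟩
      show Fin.tail (Fin.cons 0 C : Fin (m + 1) → ℕ) ∈ φ
      rw [Fin.tail_cons]
      exact h
    rw [Set.indicator_of_mem h, Set.indicator_of_mem hmem]
  · have hmem : (Fin.cons 0 C : Fin (m + 1) → ℕ) ∉
        {D : Fin (m + 1) → ℕ | D 0 = 0 ∧ Fin.tail D ∈ φ} := by
      intro hc
      have h2c : Fin.tail (Fin.cons 0 C : Fin (m + 1) → ℕ) ∈ φ := hc.2
      rw [Fin.tail_cons] at h2c
      exact h h2c
    rw [Set.indicator_of_notMem h, Set.indicator_of_notMem hmem]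

lemma S_zero {n : ℕ} (C : Fin n → ℕ) : S C 0 = 0 := by
  rw [S]
  refine Finset.sum_eq_zero fun j _ => ?_
  rw [if_neg (by omega)]

lemma S_succ_tail {n : ℕ} (D : Fin (n + 1) → ℕ) (k : ℕ) :
    S D (k + 1) = D 0 + S (Fin.tail D) k := by
  rw [S, S, Fin.sum_univ_succ]
  congr 1
  · apply Finset.sum_congr rfl
    intro j _
    have h : ((j.succ : Fin (n + 1)) : ℕ) < k + 1 ↔ (j : ℕ) < k := by
      rw [Fin.val_succ]
      omega
    by_cases hc : (j : ℕ) < k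
    · rw [if_pos (h.mpr hc), if_pos hc]
      rfl
    · rw [if_neg (fun hx => hc (h.mp hx)), if_neg hc]

lemma S_one {n : ℕ} (D : Fin (n + 1) → ℕ) : S D 1 = D 0 := by
  have := S_succ_tail D 0
  rw [S_zero, add_zero] at this
  exact this

lemma S_init {n : ℕ} (D : Fin (n + 1) → ℕ) (l : ℕ) (hl : l ≤ n) :
    S (Fin.init D) l = S D l := by
  rw [S, S, Fin.sum_univ_castSucc]
  have hlast : ¬ ((Fin.last n : Fin (n + 1)) : ℕ) < l := by
    rw [Fin.val_last]
    omega
  rw [if_neg hlast, add_zero]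
  apply Finset.sum_congr rfl
  intro j _
  have h : ((j.castSucc : Fin (n + 1)) : ℕ) = (j : ℕ) := rfl
  rw [h]
  by_cases hc : (j : ℕ) < l
  · rw [if_pos hc, if_pos hc]
    rfl
  · rw [if_neg hc, if_neg hc]

lemma S_rev_add {n : ℕ} (E : Fin n → ℕ) (k : ℕ) (hk : k ≤ n) :
    S (revFun E) k + S E (n - k) = S E n := by
  have h1 : S (revFun E) k = ∑ j : Fin n, if ¬ ((j : ℕ) < n - k) then E j else 0 := by
    rw [S, ← Equiv.sum_comp Fin.revPerm
      (fun j : Fin n => if ¬ ((j : ℕ) < n - k) then E j else 0)]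
    apply Finset.sum_congr rfl
    intro j _
    have hrev : (Fin.revPerm j : Fin n) = j.rev := rfl
    rw [hrev]
    have hiff : ¬ ((j.rev : ℕ) < n - k) ↔ (j : ℕ) < k := by
      rw [Fin.val_rev]
      have := j.isLt
      omega
    by_cases hc : (j : ℕ) < k
    · rw [if_pos hc, if_pos (hiff.mpr hc)]
      rfl
    · rw [if_neg hc, if_neg (fun hx => hc (hiff.mp hx))]
  rw [h1, S, S, ← Finset.sum_add_distrib]
  apply Finset.sum_congr rfl
  intro j _
  have hj := j.isLt
  by_cases hc : (j : ℕ) < n - k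
  · rw [if_neg (by omega), if_pos hc, if_pos (by omega), zero_add]
  · rw [if_pos hc, if_neg hc, if_pos (by omega), add_zero]

lemma S_mono {n : ℕ} (C : Fin n → ℕ) {k l : ℕ} (h : k ≤ l) : S C k ≤ S C l := by
  apply Finset.sum_le_sum
  intro j _
  by_cases hc : (j : ℕ) < k
  · rw [if_pos hc, if_pos (by omega)]
  · rw [if_neg hc]
    positivity


/-- Instance-free indicator of a proposition. -/
def pind (p : Prop) : ℝ := Set.indicator {_x : Unit | p} (fun _ => (1 : ℝ)) ()

lemma pind_of {p : Prop} (h : p) : pind p = 1 := Set.indicator_of_mem (show () ∈ {_x : Unit | p} from h) _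

lemma pind_of_not {p : Prop} (h : ¬ p) : pind p = 0 := Set.indicator_of_notMem (show () ∉ {_x : Unit | p} from h) _

lemma pind_congr {p q : Prop} (h : p ↔ q) : pind p = pind q := by
  by_cases hp : p
  · rw [pind_of hp, pind_of (h.mp hp)]
  · rw [pind_of_not hp, pind_of_not (fun hq => hp (h.mpr hq))]

lemma count_sum {M : ℕ} (hM : 1 ≤ M) (X : ℕ → ℤ) (hX : ∀ l, X l ≤ l) :
    (∑ a ∈ Finset.Icc 1 M,
      pind ((a : ℤ) ≤ X M ∧ ∀ l, 1 ≤ l → l ≤ M → X M - X l < a))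
      = pind (∀ l, 1 ≤ l → l ≤ M → 1 ≤ X l) := by
  by_cases h : ∀ l, 1 ≤ l → l ≤ M → 1 ≤ X l
  · rw [pind_of h]
    have hXM : 1 ≤ X M := h M hM le_rfl
    have hXMle := hX M
    have ha0v : (((X M).toNat : ℕ) : ℤ) = X M := Int.toNat_of_nonneg (by omega)
    have hmem : (X M).toNat ∈ Finset.Icc 1 M := by
      rw [Finset.mem_Icc]
      omega
    rw [Finset.sum_eq_single_of_mem (X M).toNat hmem ?_]
    · rw [pind_of ⟨by omega, fun l h1 h2 => by have := h l h1 h2; omega⟩]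
    · intro b hb hne
      rw [Finset.mem_Icc] at hb
      rw [pind_of_not]
      rintro ⟨hb1, hb2⟩
      have hb3 := hb2 1 le_rfl hM
      have hX1 := hX 1
      have hX1' := h 1 le_rfl hM
      exact hne (by omega)
  · rw [pind_of_not h]
    push_neg at h
    obtain ⟨l0, hl1, hl2, hl3⟩ := h
    refine Finset.sum_eq_zero fun a ha => ?_
    rw [Finset.mem_Icc] at ha
    rw [pind_of_not]
    rintro ⟨h1, h2⟩
    have := h2 l0 hl1 hl2
    omega

lemma ind_split (n : ℕ) (hn : 1 ≤ n) (X : ℕ → ℤ) :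
    pind (∀ l, 1 ≤ l → l ≤ n → 1 ≤ X l)
      = pind ((∀ l, 1 ≤ l → l ≤ n → 1 ≤ X l) ∧ X (n + 1) ≤ 0)
        + pind (∀ l, 1 ≤ l → l ≤ n + 1 → 1 ≤ X l) := by
  by_cases h1 : ∀ l, 1 ≤ l → l ≤ n → 1 ≤ X l
  · by_cases h2 : X (n + 1) ≤ 0
    · have hno : ¬ (∀ l, 1 ≤ l → l ≤ n + 1 → 1 ≤ X l) := by
        intro hc
        have := hc (n + 1) (by omega) le_rfl
        omega
      rw [pind_of h1, pind_of_not hno, pind_of ⟨h1, h2⟩]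
      norm_num
    · have hyes : ∀ l, 1 ≤ l → l ≤ n + 1 → 1 ≤ X l := by
        intro l hl1 hl2
        rcases Nat.lt_or_ge l (n + 1) with hl | hl
        · exact h1 l hl1 (by omega)
        · have he : l = n + 1 := by omega
          subst he
          omega
      rw [pind_of h1, pind_of hyes, pind_of_not (fun hc => h2 hc.2)]
      norm_num
  · have hno : ¬ (∀ l, 1 ≤ l → l ≤ n + 1 → 1 ≤ X l) := by
      intro hc
      exact h1 fun l a b => hc l a (by omega)
    rw [pind_of_not h1, pind_of_not hno, pind_of_not (fun hc => h1 hc.1)]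
    norm_num

lemma rev_cond_mem_iff {M : ℕ} (E : Fin M → ℕ) (a : ℕ) :
    ((∀ k, k < M → (k : ℤ) - S (revFun E) k < (a : ℤ)) ∧
        (a : ℤ) ≤ (M : ℤ) - S (revFun E) M)
    ↔ ((a : ℤ) ≤ (M : ℤ) - S E M ∧
        ∀ l, 1 ≤ l → l ≤ M → ((M : ℤ) - S E M) - ((l : ℤ) - S E l) < (a : ℤ)) := by
  have hrev : ∀ k, k ≤ M → (S (revFun E) k : ℤ) = (S E M : ℤ) - S E (M - k) := by
    intro k hk
    have := S_rev_add E k hk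
    omega
  have hM := hrev M le_rfl
  rw [Nat.sub_self, S_zero] at hM
  constructor
  · rintro ⟨h1, h2⟩
    refine ⟨by omega, ?_⟩
    intro l hl1 hl2
    have hk := h1 (M - l) (by omega)
    have he := hrev (M - l) (by omega)
    rw [show M - (M - l) = l from by omega] at he
    omega
  · rintro ⟨h1, h2⟩
    constructor
    · intro k hk
      have hl := h2 (M - k) (by omega) (by omega)
      have he := hrev k (by omega)
      omega
    · omega

lemma ruin_mem_iff {n : ℕ} (hn : 1 ≤ n) (D : Fin (n + 1) → ℕ) :
    (D 0 = 0 ∧ Fin.tail D ∈ {C : Fin n → ℕ |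
        (∀ k, 1 ≤ k → k < n → 0 < ((1 : ℕ) : ℤ) + k - S C k) ∧
        ((1 : ℕ) : ℤ) + n - S C n ≤ 0})
    ↔ ((∀ l, 1 ≤ l → l ≤ n → 1 ≤ (l : ℤ) - S D l) ∧
        ((n + 1 : ℕ) : ℤ) - S D (n + 1) ≤ 0) := by
  have htail : ∀ k, (S D (k + 1) : ℤ) = (D 0 : ℤ) + S (Fin.tail D) k := fun k => by
    have := S_succ_tail D k
    omega
  have h1 := S_one D
  have hS0 := S_zero (Fin.tail D)
  constructor
  · rintro ⟨h0, hA, hB⟩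
    constructor
    · intro l hl1 hl2
      cases l with
      | zero => omega
      | succ k =>
        rcases Nat.eq_zero_or_pos k with rfl | hk0
        · have := htail 0
          omega
        · have := hA k (by omega) (by omega)
          have := htail k
          omega
    · have := htail n
      omega
  · rintro ⟨hx, hy⟩
    have h0 : D 0 = 0 := by
      have := hx 1 le_rfl hn
      omega
    refine ⟨h0, ?_, ?_⟩
    · intro k hk1 hk2
      have := hx (k + 1) (by omega) (by omega)
      have := htail k
      omega
    · have := htail n
      omega

lemma key_identity {N : ℕ} {Λ : ℕ → Matrix (Fin N) (Fin N) ℝ} (hΛ : ∀ m i j, 0 ≤ Λ m i j)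
    (n : ℕ) (hn : 1 ≤ n) (i j : Fin N) (D : Fin (n + 1) → ℕ) :
    (∑ a ∈ Finset.Icc 1 n, Set.indicator
        {D : Fin (n + 1) → ℕ | Fin.init D ∈ {C : Fin n → ℕ |
          (∀ k, k < n → (k : ℤ) - S (revFun C) k < (a : ℤ)) ∧
          (a : ℤ) ≤ (n : ℤ) - S (revFun C) n}}
        (fun D => ordProd Λ D i j) D)
    = Set.indicator {D : Fin (n + 1) → ℕ | D 0 = 0 ∧ Fin.tail D ∈ {C : Fin n → ℕ |
          (∀ k, 1 ≤ k → k < n → 0 < ((1 : ℕ) : ℤ) + k - S C k) ∧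
          ((1 : ℕ) : ℤ) + n - S C n ≤ 0}}
        (fun D => ordProd Λ D i j) D
      + ∑ a ∈ Finset.Icc 1 (n + 1), Set.indicator
          {C : Fin (n + 1) → ℕ | (∀ k, k < n + 1 → (k : ℤ) - S (revFun C) k < (a : ℤ)) ∧
            (a : ℤ) ≤ ((n + 1 : ℕ) : ℤ) - S (revFun C) (n + 1)}
          (fun C => ordProd Λ C i j) D := by
  have hXle : ∀ l : ℕ, (l : ℤ) - (S D l : ℤ) ≤ l := by
    intro l
    have : (0 : ℤ) ≤ (S D l : ℤ) := Int.ofNat_nonneg _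
    omega
  have hsplit : ∀ s : Set (Fin (n + 1) → ℕ),
      s.indicator (fun D => ordProd Λ D i j) D
        = pind (D ∈ s) * ordProd Λ D i j := by
    intro s
    by_cases h : D ∈ s
    · rw [Set.indicator_of_mem h, pind_of h, one_mul]
    · rw [Set.indicator_of_notMem h, pind_of_not h, zero_mul]
  rw [Finset.sum_congr rfl fun a _ => hsplit _, hsplit _,
    Finset.sum_congr rfl fun a _ => hsplit _, ← Finset.sum_mul, ← Finset.sum_mul, ← add_mul]
  congr 1
  -- the scalar counting identity
  have iffA : ∀ a : ℕ, (D ∈ {D : Fin (n + 1) → ℕ | Fin.init D ∈ {C : Fin n → ℕ |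
        (∀ k, k < n → (k : ℤ) - S (revFun C) k < (a : ℤ)) ∧
        (a : ℤ) ≤ (n : ℤ) - S (revFun C) n}})
      ↔ ((a : ℤ) ≤ (n : ℤ) - S D n ∧
          ∀ l, 1 ≤ l → l ≤ n → ((n : ℤ) - S D n) - ((l : ℤ) - S D l) < (a : ℤ)) := by
    intro a
    have base := rev_cond_mem_iff (Fin.init D) a
    have e : ∀ l, l ≤ n → ((S (Fin.init D) l : ℕ) : ℤ) = S D l := fun l hl => by
      rw [S_init D l hl]
    have en := e n le_rfl
    constructor
    · intro hmem
      obtain ⟨u, v⟩ := base.mp hmem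
      exact ⟨by omega, fun l hl1 hl2 => by
        have hv := v l hl1 hl2
        have he := e l hl2
        omega⟩
    · rintro ⟨u, v⟩
      show (∀ k, k < n → (k : ℤ) - S (revFun (Fin.init D)) k < (a : ℤ)) ∧
          (a : ℤ) ≤ (n : ℤ) - S (revFun (Fin.init D)) n
      apply base.mpr
      exact ⟨by omega, fun l hl1 hl2 => by
        have hv := v l hl1 hl2
        have he := e l hl2
        omega⟩
  have iffB : ∀ a : ℕ, (D ∈ {C : Fin (n + 1) → ℕ |
        (∀ k, k < n + 1 → (k : ℤ) - S (revFun C) k < (a : ℤ)) ∧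
            (a : ℤ) ≤ ((n + 1 : ℕ) : ℤ) - S (revFun C) (n + 1)})
      ↔ ((a : ℤ) ≤ ((n + 1 : ℕ) : ℤ) - S D (n + 1) ∧
          ∀ l, 1 ≤ l → l ≤ n + 1 →
            (((n + 1 : ℕ) : ℤ) - S D (n + 1)) - ((l : ℤ) - S D l) < (a : ℤ)) :=
    fun a => rev_cond_mem_iff D a
  have iffE : (D ∈ {D : Fin (n + 1) → ℕ | D 0 = 0 ∧ Fin.tail D ∈ {C : Fin n → ℕ |
        (∀ k, 1 ≤ k → k < n → 0 < ((1 : ℕ) : ℤ) + k - S C k) ∧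
        ((1 : ℕ) : ℤ) + n - S C n ≤ 0}})
      ↔ ((∀ l, 1 ≤ l → l ≤ n → 1 ≤ (l : ℤ) - S D l) ∧
        ((n + 1 : ℕ) : ℤ) - S D (n + 1) ≤ 0) := ruin_mem_iff hn D
  have hc1 : (∑ a ∈ Finset.Icc 1 n,
      pind ((a : ℤ) ≤ (n : ℤ) - S D n ∧
          ∀ l, 1 ≤ l → l ≤ n → ((n : ℤ) - S D n) - ((l : ℤ) - S D l) < (a : ℤ)))
      = pind (∀ l, 1 ≤ l → l ≤ n → 1 ≤ (l : ℤ) - S D l) :=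
    count_sum hn (fun l : ℕ => (l : ℤ) - (S D l : ℤ)) hXle
  have hc2 : (∑ a ∈ Finset.Icc 1 (n + 1),
      pind ((a : ℤ) ≤ ((n + 1 : ℕ) : ℤ) - S D (n + 1) ∧
          ∀ l, 1 ≤ l → l ≤ n + 1 →
            (((n + 1 : ℕ) : ℤ) - S D (n + 1)) - ((l : ℤ) - S D l) < (a : ℤ)))
      = pind (∀ l, 1 ≤ l → l ≤ n + 1 → 1 ≤ (l : ℤ) - S D l) :=
    count_sum (by omega) (fun l : ℕ => (l : ℤ) - (S D l : ℤ)) hXle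
  have hsp : pind (∀ l, 1 ≤ l → l ≤ n → 1 ≤ (l : ℤ) - S D l)
      = pind ((∀ l, 1 ≤ l → l ≤ n → 1 ≤ (l : ℤ) - S D l) ∧
            ((n + 1 : ℕ) : ℤ) - S D (n + 1) ≤ 0)
        + pind (∀ l, 1 ≤ l → l ≤ n + 1 → 1 ≤ (l : ℤ) - S D l) :=
    ind_split n hn (fun l : ℕ => (l : ℤ) - (S D l : ℤ))
  rw [Finset.sum_congr rfl fun a _ => pind_congr (iffA a), hc1, hsp]
  congr 1
  · exact (pind_congr iffE).symm
  · rw [← hc2]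
    exact Finset.sum_congr rfl fun a _ => (pind_congr (iffB a)).symm

/-- Distribution of the time to ruin, initial surplus one.  Assume
`λ_{ij}(0) > 0`, `Λ(0)` invertible, and the environment chain stationary with distribution
`π`.  With `x = 1`, for every `n ≥ 1`,
`P_{x=1}(τ_0^- = n, J_n) = Λ(0)⁻¹·(Σ_{m=1}^{n} V(n,m)·P − Σ_{m=1}^{n+1} V(n+1,m))`. -/
theorem ruin_time_distribution_one
    {N : ℕ} (hN : 1 ≤ N)
    (Λ : ℕ → Matrix (Fin N) (Fin N) ℝ) (P : Matrix (Fin N) (Fin N) ℝ)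
    (hΛ : ∀ m i j, 0 ≤ Λ m i j)
    (hP : ∀ i j, HasSum (fun m => Λ m i j) (P i j))
    (hPstoch : ∀ i, ∑ j, P i j = 1)
    (π : Fin N → ℝ) (hπpos : ∀ i, 0 < π i) (hπsum : ∑ i, π i = 1)
    (hπP : ∀ j, ∑ i, π i * P i j = π j)
    (hzero : ∀ i j, 0 < Λ 0 i j) (hinv : IsUnit (Λ 0))
    (n : ℕ) (hn : 1 ≤ n) :
    ruinM Λ 1 n = (Λ 0)⁻¹ *
      ((∑ m ∈ Finset.Icc 1 n, Vmat Λ π n m * P) -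
        ∑ m ∈ Finset.Icc 1 (n + 1), Vmat Λ π (n + 1) m) := by
  have hS : ∀ i j, Summable fun m => Λ m i j := fun i j => (hP i j).summable
  have hdet : IsUnit (Λ 0).det := (Matrix.isUnit_iff_isUnit_det (Λ 0)).mp hinv
  have hruin : ruinM Λ 1 n = Matrix.of fun i j => ∑' C : Fin n → ℕ,
      Set.indicator {C : Fin n → ℕ |
          (∀ k, 1 ≤ k → k < n → 0 < ((1 : ℕ) : ℤ) + k - S C k) ∧
          ((1 : ℕ) : ℤ) + n - S C n ≤ 0}
        (fun C => ordProd Λ C i j) C := by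
    funext i j
    exact prob_eq hΛ hS
      (fun C : Fin n → ℕ => ∀ k, 1 ≤ k → k < n → 0 < ((1 : ℕ) : ℤ) + k - S C k)
      (fun C : Fin n → ℕ => ((1 : ℕ) : ℤ) + n - S C n ≤ 0) i j
  have hmain : Λ 0 * ruinM Λ 1 n = (∑ m ∈ Finset.Icc 1 n, Vmat Λ π n m * P) -
      ∑ m ∈ Finset.Icc 1 (n + 1), Vmat Λ π (n + 1) m := by
    ext i j
    rw [Matrix.sub_apply, Matrix.sum_apply, Matrix.sum_apply]
    rw [hruin, lam0_mul_eq hΛ hS _ i j]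
    have hVP : ∀ a ∈ Finset.Icc 1 n, (Vmat Λ π n a * P) i j
        = ∑' D : Fin (n + 1) → ℕ,
            Set.indicator {D : Fin (n + 1) → ℕ | Fin.init D ∈ {C : Fin n → ℕ |
              (∀ k, k < n → (k : ℤ) - S (revFun C) k < (a : ℤ)) ∧
              (a : ℤ) ≤ (n : ℤ) - S (revFun C) n}}
            (fun D => ordProd Λ D i j) D := by
      intro a _
      have hv : Vmat Λ π n a = Matrix.of fun i j => ∑' C : Fin n → ℕ,
          Set.indicator {C : Fin n → ℕ |
              (∀ k, k < n → (k : ℤ) - S (revFun C) k < (a : ℤ)) ∧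
              (a : ℤ) ≤ (n : ℤ) - S (revFun C) n}
            (fun C => ordProd Λ C i j) C := by
        funext i' j'
        exact Vmat_eq hΛ hS hπpos n a i' j'
      rw [hv, mulP_eq hΛ hP _ i j]
    have hVB : ∀ a ∈ Finset.Icc 1 (n + 1), Vmat Λ π (n + 1) a i j
        = ∑' C : Fin (n + 1) → ℕ,
            Set.indicator {C : Fin (n + 1) → ℕ |
              (∀ k, k < n + 1 → (k : ℤ) - S (revFun C) k < (a : ℤ)) ∧
              (a : ℤ) ≤ ((n + 1 : ℕ) : ℤ) - S (revFun C) (n + 1)}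
            (fun C => ordProd Λ C i j) C :=
      fun a _ => Vmat_eq hΛ hS hπpos (n + 1) a i j
    rw [Finset.sum_congr rfl hVP, Finset.sum_congr rfl hVB]
    rw [← Summable.tsum_finsetSum (fun a _ => summable_ind_ordProd hΛ hS _ i j),
      ← Summable.tsum_finsetSum (fun a _ => summable_ind_ordProd hΛ hS _ i j)]
    have h₁ := tsum_congr (L := SummationFilter.unconditional _) (key_identity hΛ n hn i j)
    rw [Summable.tsum_add (summable_ind_ordProd hΛ hS _ i j)
      (summable_sum (fun a (_ : a ∈ Finset.Icc 1 (n + 1)) =>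
        summable_ind_ordProd hΛ hS _ i j))] at h₁
    rw [h₁]
    ring
  calc ruinM Λ 1 n = 1 * ruinM Λ 1 n := (one_mul _).symm
    _ = ((Λ 0)⁻¹ * Λ 0) * ruinM Λ 1 n := by rw [Matrix.nonsing_inv_mul _ hdet]
    _ = (Λ 0)⁻¹ * (Λ 0 * ruinM Λ 1 n) := by rw [Matrix.mul_assoc]
    _ = _ := by rw [hmain]

end CMB
end
end

section
/- (Kemperman/Takács hitting-time formula, scalar case.) Let λ : ℕ → ℝ be a probability mass function (λ(m) ≥ 0, Σ_{m=0}^∞ λ(m) = 1), and consider i.i.d. claims C_1, C_2, … with law λ: the probability of a claim path (c_1,…,c_n) ∈ ℕ^n is ∏_{k=1}^n λ(c_k). Let S_k = c_1 + ⋯ + c_k, X_k = k − S_k, and τ_a^+ = min{k ≥ 0 : X_k ≥ a}. Then for all integers n ≥ a ≥ 1: P(τ_a^+ = n) = (a/n) · λ^{*n}(n − a), where λ^{*n}(s) = P(S_n = s) is the n-fold convolution of λ. -/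
open scoped BigOperators

noncomputable section

namespace CMB

/-- `n`-fold convolution of a pmf on `ℕ`. -/
def sconv (lam : ℕ → ℝ) : ℕ → ℕ → ℝ
  | 0, m => if m = 0 then 1 else 0
  | n + 1, m => ∑ k ∈ Finset.range (m + 1), sconv lam n k * lam (m - k)

/-- `sconv lam n m` is the sum over tuples of length `n` with sum `m` of the product. -/
private lemma sconv_eq_sum (lam : ℕ → ℝ) :
    ∀ n m : ℕ, sconv lam n m = ∑ c ∈ Finset.Nat.antidiagonalTuple n m, ∏ k, lam (c k) := by
  intro n
  induction n with
  | zero =>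
      intro m
      cases m with
      | zero => rw [Finset.Nat.antidiagonalTuple_zero_zero]; simp [sconv]
      | succ m => rw [Finset.Nat.antidiagonalTuple_zero_succ]; simp [sconv]
  | succ n ih =>
      intro m
      have h1 : sconv lam (n + 1) m
          = ∑ k ∈ Finset.range (m + 1), ∑ d ∈ Finset.Nat.antidiagonalTuple n k,
              (∏ j, lam (d j)) * lam (m - k) := by
        simp only [sconv, ih, Finset.sum_mul]
      rw [h1, Finset.sum_sigma' (Finset.range (m + 1))
        (fun k => Finset.Nat.antidiagonalTuple n k)
        (fun k d => (∏ j, lam (d j)) * lam (m - k))]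
      refine Finset.sum_nbij' (i := fun x => Fin.snoc x.2 (m - x.1))
        (j := fun c => ⟨∑ j, Fin.init c j, Fin.init c⟩) ?_ ?_ ?_ ?_ ?_
      · rintro ⟨k, d⟩ hx
        rw [Finset.mem_sigma, Finset.mem_range] at hx
        obtain ⟨hk, hd⟩ := hx
        dsimp only at hk hd ⊢
        rw [Finset.Nat.mem_antidiagonalTuple] at hd ⊢
        rw [Fin.sum_univ_castSucc]
        simp only [Fin.snoc_castSucc, Fin.snoc_last]
        rw [hd]; omega
      · intro c hc
        rw [Finset.Nat.mem_antidiagonalTuple] at hc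
        rw [Finset.mem_sigma, Finset.mem_range, Finset.Nat.mem_antidiagonalTuple]
        have h2 : ∑ i : Fin (n + 1), c i = (∑ j : Fin n, Fin.init c j) + c (Fin.last n) := by
          rw [Fin.sum_univ_castSucc]; rfl
        dsimp only
        constructor
        · omega
        · rfl
      · rintro ⟨k, d⟩ hx
        rw [Finset.mem_sigma, Finset.mem_range] at hx
        obtain ⟨hk, hd⟩ := hx
        rw [Finset.Nat.mem_antidiagonalTuple] at hd
        have h3 : Fin.init (Fin.snoc d (m - k) : Fin (n+1) → ℕ) = d := Fin.init_snoc _ _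
        dsimp only at hk hd ⊢
        refine Sigma.ext ?_ ?_
        · simp only [h3, hd]
        · simp only [h3]; exact HEq.rfl
      · intro c hc
        rw [Finset.Nat.mem_antidiagonalTuple] at hc
        have h2 : ∑ i : Fin (n + 1), c i = (∑ j : Fin n, Fin.init c j) + c (Fin.last n) := by
          rw [Fin.sum_univ_castSucc]; rfl
        have h4 : m - (∑ j, Fin.init c j) = c (Fin.last n) := by omega
        show Fin.snoc (Fin.init c) (m - ∑ j, Fin.init c j) = c
        rw [h4, Fin.snoc_init_self]
      · rintro ⟨k, d⟩ hx
        rw [Finset.mem_sigma, Finset.mem_range] at hx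
        show (∏ j, lam (d j)) * lam (m - k)
            = ∏ j : Fin (n + 1), lam ((Fin.snoc d (m - k) : Fin (n+1) → ℕ) j)
        rw [Fin.prod_univ_castSucc]
        simp only [Fin.snoc_castSucc, Fin.snoc_last]

/-- The periodized extension of a tuple. -/
private def pe {n : ℕ} [NeZero n] (c : Fin n → ℕ) (j : ℕ) : ℕ :=
  c ⟨j % n, Nat.mod_lt _ (Nat.pos_of_ne_zero (NeZero.ne n))⟩

private lemma pe_apply {n : ℕ} [NeZero n] (c : Fin n → ℕ) (i : Fin n) : pe c (i : ℕ) = c i := by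
  unfold pe
  congr 1
  exact Fin.ext (Nat.mod_eq_of_lt i.isLt)

private lemma pe_add_n {n : ℕ} [NeZero n] (c : Fin n → ℕ) (j : ℕ) : pe c (j + n) = pe c j := by
  unfold pe
  congr 1
  exact Fin.ext (by simp [Nat.add_mod_right])

/-- Partial sums of the periodized extension. -/
private def G {n : ℕ} [NeZero n] (c : Fin n → ℕ) (k : ℕ) : ℕ := ∑ j ∈ Finset.range k, pe c j

private lemma S_eq_G {n : ℕ} [NeZero n] (c : Fin n → ℕ) {k : ℕ} (hk : k ≤ n) :
    S c k = G c k := by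
  unfold S G
  have h1 : ∀ i : Fin n, (if (i : ℕ) < k then c i else 0)
      = (fun j => if j < k then pe c j else 0) (i : ℕ) := by
    intro i
    simp only [pe_apply]
  rw [Finset.sum_congr rfl (fun i _ => h1 i),
    Fin.sum_univ_eq_sum_range (fun j => if j < k then pe c j else 0) n]
  rw [← Finset.sum_subset (Finset.range_subset_range.2 hk)
    (fun x _ hx => if_neg (by simpa using hx))]
  exact Finset.sum_congr rfl fun j hj => if_pos (Finset.mem_range.1 hj)

private lemma S_top {n : ℕ} (c : Fin n → ℕ) : S c n = ∑ i, c i := by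
  unfold S
  exact Finset.sum_congr rfl fun i _ => if_pos i.isLt

private lemma G_per {n : ℕ} [NeZero n] (c : Fin n → ℕ) (k : ℕ) :
    G c (k + n) = G c k + G c n := by
  unfold G
  rw [Nat.add_comm k n, Finset.sum_range_add (pe c) n k, add_comm]
  congr 1
  refine Finset.sum_congr rfl fun j _ => ?_
  rw [Nat.add_comm n j, pe_add_n]

/-- Rotation of a tuple. -/
private def rot {n : ℕ} [NeZero n] (r : Fin n) (c : Fin n → ℕ) : Fin n → ℕ := fun i => c (i + r)

private lemma pe_rot {n : ℕ} [NeZero n] (r : Fin n) (c : Fin n → ℕ) (j : ℕ) :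
    pe (rot r c) j = pe c (j + r.val) := by
  unfold pe rot
  congr 1
  refine Fin.ext ?_
  rw [Fin.val_add]
  show ((j % n) + (r : ℕ)) % n = (j + (r : ℕ)) % n
  rw [Nat.mod_add_mod]

private lemma S_rot {n : ℕ} [NeZero n] (r : Fin n) (c : Fin n → ℕ) {k : ℕ} (hk : k ≤ n) :
    G c r.val + S (rot r c) k = G c (r.val + k) := by
  rw [S_eq_G _ hk]
  unfold G
  rw [Finset.sum_range_add (pe c) r.val k]
  congr 1
  refine Finset.sum_congr rfl fun j _ => ?_
  rw [pe_rot, Nat.add_comm]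

private lemma rot_rot_neg {n : ℕ} [NeZero n] (r : Fin n) (c : Fin n → ℕ) :
    rot (-r) (rot r c) = c := by
  funext i
  show c (i + -r + r) = c i
  congr 1
  rw [add_assoc, neg_add_cancel, add_zero]

private lemma rot_neg_rot {n : ℕ} [NeZero n] (r : Fin n) (c : Fin n → ℕ) :
    rot r (rot (-r) c) = c := by
  funext i
  show c (i + r + -r) = c i
  congr 1
  rw [add_assoc, add_neg_cancel, add_zero]

private lemma prod_rot {n : ℕ} [NeZero n] (lam : ℕ → ℝ) (r : Fin n) (c : Fin n → ℕ) :
    (∏ k, lam (rot r c k)) = ∏ k, lam (c k) :=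
  Fintype.prod_equiv (Equiv.addRight r) _ _ (fun _ => rfl)

private lemma sum_rot {n : ℕ} [NeZero n] (r : Fin n) (c : Fin n → ℕ) :
    (∑ i, rot r c i) = ∑ i, c i :=
  Fintype.sum_equiv (Equiv.addRight r) _ _ (fun _ => rfl)

/-- The cycle lemma: for a walk with upward steps at most `1`, `T 0 = 0`, and
period-`n` increment `a ≥ 1`, exactly `a` of the `n` rotations stay below `a`. -/
private lemma cycle_count (n a : ℕ) (ha : 1 ≤ a) (T : ℕ → ℤ)
    (h0 : T 0 = 0) (hstep : ∀ k, T (k + 1) ≤ T k + 1)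
    (hper : ∀ k, T (k + n) = T k + (a : ℤ)) :
    ((Finset.range n).filter (fun r => ∀ k, k < n → T (r + k) < T r + a)).card = a := by
  classical
  have hTn : T n = a := by
    have h := hper 0
    rw [Nat.zero_add, h0, zero_add] at h
    exact h
  have hn : 0 < n := by
    by_contra h
    push_neg at h
    have hn0 : n = 0 := by omega
    have h1 : (0 : ℤ) = a := by rw [← h0, ← hTn, hn0]
    omega
  have ivt : ∀ (v : ℤ), 0 ≤ v → ∀ j, v ≤ T j → ∃ i, i ≤ j ∧ T i = v := by
    intro v hv j
    induction j with
    | zero => intro hj; exact ⟨0, le_refl 0, by omega⟩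
    | succ j ih =>
        intro hj
        by_cases h : v ≤ T j
        · obtain ⟨i, h1, h2⟩ := ih h
          exact ⟨i, h1.trans (Nat.le_succ j), h2⟩
        · exact ⟨j + 1, le_refl _, by have := hstep j; omega⟩
  obtain ⟨j₀, hj₀n, hj₀⟩ : ∃ j₀, j₀ < n ∧ ∀ j, j < n → T j ≤ T j₀ := by
    obtain ⟨j₀, hmem, hmax⟩ := Finset.exists_max_image (Finset.range n) T
      ⟨0, Finset.mem_range.2 hn⟩
    exact ⟨j₀, Finset.mem_range.1 hmem, fun j hj => hmax j (Finset.mem_range.2 hj)⟩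
  have hMa : (a : ℤ) ≤ T j₀ + 1 := by
    have h1 := hstep (n - 1)
    have h2 : n - 1 + 1 = n := by omega
    rw [h2, hTn] at h1
    have h3 := hj₀ (n - 1) (by omega)
    omega
  have hprev : ∀ r, r < n → (∀ k, k < n → T (r + k) < T r + a) → ∀ j, j < r → T j < T r := by
    intro r hr hPr j hj
    have hk : j + n - r < n := by omega
    have h1 := hPr (j + n - r) hk
    have he : r + (j + n - r) = j + n := by omega
    rw [he, hper j] at h1
    omega
  have card_eq : ((Finset.range n).filter (fun r => ∀ k, k < n → T (r + k) < T r + a)).card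
      = (Finset.Icc (T j₀ - a + 1) (T j₀)).card := by
    refine Finset.card_bij (fun r _ => T r) ?_ ?_ ?_
    · intro r hr
      rw [Finset.mem_filter, Finset.mem_range] at hr
      obtain ⟨hrn, hPr⟩ := hr
      rw [Finset.mem_Icc]
      show T j₀ - (a : ℤ) + 1 ≤ T r ∧ T r ≤ T j₀
      refine ⟨?_, hj₀ r hrn⟩
      rcases Nat.lt_or_ge j₀ r with h | h
      · have := hprev r hrn hPr j₀ h
        omega
      · have h1 := hPr (j₀ - r) (by omega)
        have he : r + (j₀ - r) = j₀ := by omega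
        rw [he] at h1
        omega
    · intro r1 h1 r2 h2 heq
      rw [Finset.mem_filter, Finset.mem_range] at h1 h2
      have heq' : T r1 = T r2 := heq
      clear heq
      by_contra hne
      rcases Nat.lt_or_ge r1 r2 with h | h
      · have := hprev r2 h2.1 h2.2 r1 h; omega
      · have h' : r2 < r1 := by omega
        have := hprev r1 h1.1 h1.2 r2 h'; omega
    · intro v hv
      rw [Finset.mem_Icc] at hv
      have hv0 : 0 ≤ v := by omega
      obtain ⟨i, hij, hiv⟩ := ivt v hv0 j₀ (by omega)
      have hex : ∃ i, T i = v := ⟨i, hiv⟩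
      have hrv : T (Nat.find hex) = v := Nat.find_spec hex
      have hri : Nat.find hex ≤ i := Nat.find_min' hex hiv
      have hrn : Nat.find hex < n := by omega
      have hless : ∀ j, j < Nat.find hex → T j < v := by
        intro j hj
        rcases lt_or_ge (T j) v with h | h
        · exact h
        · rcases eq_or_lt_of_le h with h' | h'
          · exact absurd h'.symm (Nat.find_min hex hj)
          · obtain ⟨i', hi1, hi2⟩ := ivt v hv0 j (le_of_lt h')
            exact absurd hi2 (Nat.find_min hex (by omega))
      refine ⟨Nat.find hex, ?_, hrv⟩
      rw [Finset.mem_filter, Finset.mem_range]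
      refine ⟨hrn, ?_⟩
      intro k hk
      rcases Nat.lt_or_ge (Nat.find hex + k) n with h | h
      · have := hj₀ (Nat.find hex + k) h
        omega
      · have he : Nat.find hex + k = (Nat.find hex + k - n) + n := by omega
        have h2 : T (Nat.find hex + k) = T (Nat.find hex + k - n) + a := by
          conv_lhs => rw [he]
          exact hper _
        have h3 : Nat.find hex + k - n < Nat.find hex := by omega
        have := hless _ h3
        omega
  rw [card_eq, Int.card_Icc]
  have h5 : T j₀ + 1 - (T j₀ - a + 1) = a := by ring
  rw [h5]
  exact Int.toNat_natCast a

/-- Kemperman/Takács hitting-time formula, scalar case.  For i.i.d.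
claims with pmf `λ` on `ℕ`, `X_k = k − S_k` and `τ_a^+ = min{k ≥ 0 : X_k ≥ a}`, one has,
for `n ≥ a ≥ 1`, `P(τ_a^+ = n) = (a/n)·λ^{*n}(n − a)`.  The event `{τ_a^+ = n}` is the set
of claim paths with `k − S_k < a` for all `k < n` and `n − S_n ≥ a`, and its probability is
the sum of the products `∏_k λ(c_k)` over these paths. -/
theorem kemperman_scalar (lam : ℕ → ℝ) (hnn : ∀ m, 0 ≤ lam m) (hsum : HasSum lam 1)
    (a n : ℕ) (ha : 1 ≤ a) (han : a ≤ n) :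
    (∑' c : { c : Fin n → ℕ //
        (∀ k, k < n → (k : ℤ) - S c k < (a : ℤ)) ∧ (a : ℤ) ≤ (n : ℤ) - S c n },
      ∏ k : Fin n, lam (c.1 k)) =
      ((a : ℝ) / (n : ℝ)) * sconv lam n (n - a) := by
  classical
  have hn : 0 < n := lt_of_lt_of_le ha han
  haveI : NeZero n := ⟨hn.ne'⟩
  set m := n - a with hm
  set W : (Fin n → ℕ) → ℝ := fun c => ∏ k, lam (c k) with hW
  set Good : (Fin n → ℕ) → Prop :=
    fun c => ∀ k, k < n → (k : ℤ) - S c k < (a : ℤ) with hGoodDef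
  set Tset := Finset.Nat.antidiagonalTuple n m with hTset
  set F := Tset.filter Good with hF
  -- The cycle-lemma count, for each tuple with total sum `m`.
  have keycount : ∀ c ∈ Tset, (Finset.univ.filter (fun r : Fin n => Good (rot r c))).card = a := by
    intro c hc
    have hsc : ∑ i, c i = m := Finset.Nat.mem_antidiagonalTuple.1 hc
    set T : ℕ → ℤ := fun k => (k : ℤ) - G c k with hTdef
    have hGn : (G c n : ℤ) = (n : ℤ) - a := by
      have h1 : G c n = ∑ i, c i := by rw [← S_eq_G c (le_refl n), S_top]
      rw [h1, hsc, hm]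
      omega
    have h0 : T 0 = 0 := by simp [hTdef, G]
    have hstep : ∀ k, T (k + 1) ≤ T k + 1 := by
      intro k
      simp only [hTdef]
      have h1 : G c (k + 1) = G c k + pe c k := Finset.sum_range_succ (pe c) k
      rw [h1]
      push_cast
      omega
    have hper : ∀ k, T (k + n) = T k + (a : ℤ) := by
      intro k
      simp only [hTdef]
      rw [G_per]
      push_cast
      omega
    have htrans : ∀ r : Fin n,
        Good (rot r c) ↔ ∀ k, k < n → T (r.val + k) < T r.val + a := by
      intro r
      have hpt : ∀ k, k < n → (((k : ℤ) - S (rot r c) k < (a : ℤ))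
          ↔ T (r.val + k) < T r.val + a) := by
        intro k hk
        have hS := S_rot r c (le_of_lt hk)
        have hS' : (G c r.val : ℤ) + (S (rot r c) k : ℤ) = (G c (r.val + k) : ℤ) := by
          exact_mod_cast hS
        simp only [hTdef]
        push_cast
        omega
      exact ⟨fun h k hk => (hpt k hk).1 (h k hk), fun h k hk => (hpt k hk).2 (h k hk)⟩
    have hbij : (Finset.univ.filter (fun r : Fin n => Good (rot r c))).card
        = ((Finset.range n).filter (fun r => ∀ k, k < n → T (r + k) < T r + a)).card := by
      refine Finset.card_bij (fun (r : Fin n) _ => r.val) ?_ ?_ ?_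
      · intro r hr
        rw [Finset.mem_filter] at hr
        rw [Finset.mem_filter, Finset.mem_range]
        exact ⟨r.isLt, (htrans r).1 hr.2⟩
      · intro r1 _ r2 _ h
        exact Fin.val_injective h
      · intro b hb
        rw [Finset.mem_filter, Finset.mem_range] at hb
        refine ⟨⟨b, hb.1⟩, ?_, rfl⟩
        rw [Finset.mem_filter]
        exact ⟨Finset.mem_univ _, (htrans ⟨b, hb.1⟩).2 hb.2⟩
    rw [hbij]
    exact cycle_count n a ha T h0 hstep hper
  -- Double counting.
  have expand : ∀ c : Fin n → ℕ,
      ((Finset.univ.filter (fun r : Fin n => Good (rot r c))).card : ℝ) * W c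
      = ∑ r : Fin n, (if Good (rot r c) then W c else 0) := by
    intro c
    have h1 : ∑ r : Fin n, (if Good (rot r c) then W c else 0)
        = ∑ _r ∈ Finset.univ.filter (fun r : Fin n => Good (rot r c)), W c :=
      (Finset.sum_filter _ _).symm
    rw [h1, Finset.sum_const, nsmul_eq_mul]
  have count1 : ∑ c ∈ Tset, ∑ r : Fin n, (if Good (rot r c) then W c else 0)
      = (a : ℝ) * ∑ c ∈ Tset, W c := by
    rw [Finset.mul_sum]
    refine Finset.sum_congr rfl fun c hc => ?_
    rw [← expand c, keycount c hc]
  have count2 : ∑ c ∈ Tset, ∑ r : Fin n, (if Good (rot r c) then W c else 0)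
      = (n : ℝ) * ∑ d ∈ F, W d := by
    rw [Finset.sum_comm]
    have inner : ∀ r : Fin n,
        (∑ c ∈ Tset, if Good (rot r c) then W c else 0) = ∑ d ∈ F, W d := by
      intro r
      have hWrot : ∀ c, W (rot r c) = W c := fun c => prod_rot lam r c
      have h2 : (∑ c ∈ Tset, if Good (rot r c) then W c else 0)
          = ∑ d ∈ Tset, if Good d then W d else 0 := by
        refine Finset.sum_nbij' (i := rot r) (j := rot (-r)) ?_ ?_ ?_ ?_ ?_
        · intro c hcT
          rw [hTset, Finset.Nat.mem_antidiagonalTuple] at hcT ⊢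
          rw [sum_rot]; exact hcT
        · intro c hcT
          rw [hTset, Finset.Nat.mem_antidiagonalTuple] at hcT ⊢
          rw [sum_rot]; exact hcT
        · intro c _; exact rot_rot_neg r c
        · intro c _; exact rot_neg_rot r c
        · intro c _
          rw [← hWrot c]
      rw [h2, hF, Finset.sum_filter]
    rw [Finset.sum_congr rfl (fun r _ => inner r), Finset.sum_const, Finset.card_univ,
      Fintype.card_fin, nsmul_eq_mul]
  have main : (a : ℝ) * ∑ c ∈ Tset, W c = (n : ℝ) * ∑ d ∈ F, W d := by
    rw [← count1, ← count2]
  -- Identify the event with `F`.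
  have hsub : ∀ c : Fin n → ℕ,
      ((∀ k, k < n → (k : ℤ) - S c k < (a : ℤ)) ∧ (a : ℤ) ≤ (n : ℤ) - S c n) ↔ c ∈ F := by
    intro c
    have hSn : S c n = ∑ i, c i := S_top c
    have hmono : S c (n - 1) ≤ S c n := by
      refine Finset.sum_le_sum fun i _ => ?_
      split_ifs <;> omega
    constructor
    · rintro ⟨h1, h2⟩
      rw [hF, Finset.mem_filter]
      refine ⟨?_, h1⟩
      rw [hTset, Finset.Nat.mem_antidiagonalTuple, ← hSn, hm]
      have h3 := h1 (n - 1) (by omega)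
      omega
    · intro hcF
      rw [hF, Finset.mem_filter] at hcF
      obtain ⟨hcT, hG⟩ := hcF
      refine ⟨hG, ?_⟩
      rw [hTset, Finset.Nat.mem_antidiagonalTuple] at hcT
      rw [← hSn] at hcT
      rw [hm] at hcT
      omega
  have key : (∑' c : { c : Fin n → ℕ //
      (∀ k, k < n → (k : ℤ) - S c k < (a : ℤ)) ∧ (a : ℤ) ≤ (n : ℤ) - S c n },
      ∏ k : Fin n, lam (c.1 k)) = ∑ d ∈ F, W d := by
    rw [← Finset.tsum_subtype F W]
    exact Equiv.tsum_eq (Equiv.subtypeEquivRight hsub) (fun d => W d.1)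
  rw [key, sconv_eq_sum, ← hTset]
  have hne : (n : ℝ) ≠ 0 := Nat.cast_ne_zero.2 hn.ne'
  rw [div_mul_eq_mul_div, eq_div_iff hne]
  rw [mul_comm (∑ d ∈ F, W d) (n : ℝ), ← main]

end CMB
end
end
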